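/- arXiv:1305.0678 — 5 statements merged into one kernel-verified Lean document; each statement's English description precedes it below -/
import Mathlib

section
/- Let V be a finite-dimensional real inner product space, P : ℝ → (V →L[ℝ] V) a differentiable family of orthogonal projections, R : ℝ → (V →L[ℝ] V) a continuous family of symmetric linear operators, and c > 0. Let η, ς : ℝ → V be differentiable curves satisfying the linearized Jacobi system η'(t) = ς(t) and ς'(t) = −R(t)(η(t)). Write η_A = P η, ς_A = P ς, η_B = (Id − P) η, ς_B = (Id − P) ς and define Q^c(t) = ⟨η_A(t), ς_A(t)⟩ − c²⟨η_B(t), η_B(t)⟩ − ⟨ς_B(t), ς_B(t)⟩. Then for every t, (Q^c)'(t) = ⟨ς_A, ς_A⟩ − ⟨R η, η_A⟩ + ⟨P' η_B, ς_A⟩ + ⟨η_A, P' ς_B⟩ − 2c²⟨η_B, ς_B⟩ + 2⟨R η, ς_B⟩ + 2c²⟨P' η_A, η_B⟩ + 2⟨P' ς_A, ς_B⟩, where all quantities on the right are evaluated at t. -/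
open RealInnerProductSpace

/-- Derivative of the quadratic form `Q^c` along the linearized Jacobi system
`η' = ς`, `ς' = -R η`, for a differentiable family of orthogonal projections `P`. -/
theorem stmt_1 {V : Type*} [NormedAddCommGroup V] [InnerProductSpace ℝ V]
    [FiniteDimensional ℝ V]
    (P : ℝ → (V →L[ℝ] V)) (hP : Differentiable ℝ P)
    (hPsa : ∀ t, IsSelfAdjoint (P t))
    (hPidem : ∀ t, (P t).comp (P t) = P t)
    (R : ℝ → (V →L[ℝ] V)) (hRcont : Continuous R)
    (hRsym : ∀ t, IsSelfAdjoint (R t))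
    (c : ℝ) (hc : 0 < c)
    (η ς : ℝ → V) (hη : Differentiable ℝ η) (hς : Differentiable ℝ ς)
    (hη' : ∀ t, deriv η t = ς t)
    (hς' : ∀ t, deriv ς t = -(R t (η t))) :
    ∀ t : ℝ,
      deriv (fun s =>
        ⟪P s (η s), P s (ς s)⟫
          - c ^ 2 * ⟪(1 - P s) (η s), (1 - P s) (η s)⟫
          - ⟪(1 - P s) (ς s), (1 - P s) (ς s)⟫) t
      = ⟪P t (ς t), P t (ς t)⟫
          - ⟪R t (η t), P t (η t)⟫
          + ⟪deriv P t ((1 - P t) (η t)), P t (ς t)⟫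
          + ⟪P t (η t), deriv P t ((1 - P t) (ς t))⟫
          - 2 * c ^ 2 * ⟪(1 - P t) (η t), (1 - P t) (ς t)⟫
          + 2 * ⟪R t (η t), (1 - P t) (ς t)⟫
          + 2 * c ^ 2 * ⟪deriv P t (P t (η t)), (1 - P t) (η t)⟫
          + 2 * ⟪deriv P t (P t (ς t)), (1 - P t) (ς t)⟫ := by
  intro t
  have hηd : HasDerivAt η (ς t) t := hη' t ▸ (hη t).hasDerivAt
  have hςd : HasDerivAt ς (-(R t (η t))) t := hς' t ▸ (hς t).hasDerivAt
  have hAη : HasDerivAt (fun s => P s (η s)) (deriv P t (η t) + P t (ς t)) t :=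
    (hP t).hasDerivAt.clm_apply hηd
  have hAς : HasDerivAt (fun s => P s (ς s)) (deriv P t (ς t) + P t (-(R t (η t)))) t :=
    (hP t).hasDerivAt.clm_apply hςd
  have hB : HasDerivAt (fun s => 1 - P s) (-(deriv P t)) t := (hP t).hasDerivAt.const_sub 1
  have hBη : HasDerivAt (fun s => (1 - P s) (η s)) ((-(deriv P t)) (η t) + (1 - P t) (ς t)) t :=
    hB.clm_apply hηd
  have hBς : HasDerivAt (fun s => (1 - P s) (ς s))
      ((-(deriv P t)) (ς t) + (1 - P t) (-(R t (η t)))) t := hB.clm_apply hςd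
  have hQ := ((hAη.inner ℝ hAς).sub ((hBη.inner ℝ hBη).const_mul (c^2))).sub (hBς.inner ℝ hBς)
  refine hQ.deriv.trans ?_
  simp only [ContinuousLinearMap.sub_apply, ContinuousLinearMap.one_apply,
    ContinuousLinearMap.neg_apply, map_neg, map_sub, inner_add_left, inner_add_right,
    inner_sub_left, inner_sub_right, inner_neg_left, inner_neg_right]
  -- symmetry of P t, deriv P t, R t
  have h1 : ∀ x y : V, ⟪P t x, y⟫ = ⟪x, P t y⟫ := fun x y =>
    ((ContinuousLinearMap.isSelfAdjoint_iff_isSymmetric).mp (hPsa t)) x y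
  have h3 : ∀ x y : V, ⟪R t x, y⟫ = ⟪x, R t y⟫ := fun x y =>
    ((ContinuousLinearMap.isSelfAdjoint_iff_isSymmetric).mp (hRsym t)) x y
  have h2 : ∀ x y : V, ⟪deriv P t x, y⟫ = ⟪x, deriv P t y⟫ := by
    intro x y
    have hd := (((hP t).hasDerivAt.clm_apply (hasDerivAt_const t x)).inner ℝ
          (hasDerivAt_const t y)).sub
        ((hasDerivAt_const t x).inner ℝ ((hP t).hasDerivAt.clm_apply (hasDerivAt_const t y)))
    simp only [map_zero, inner_zero_left, inner_zero_right, add_zero, zero_add] at hd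
    have he : (fun s => ⟪P s x, y⟫ - ⟪x, P s y⟫) = fun _ : ℝ => (0:ℝ) := by
      funext s
      exact sub_eq_zero.mpr (((ContinuousLinearMap.isSelfAdjoint_iff_isSymmetric).mp (hPsa s)) x y)
    rw [show ((fun s => ⟪P s x, y⟫) - fun s => ⟪x, P s y⟫) = fun _ : ℝ => (0:ℝ) from he] at hd
    have := hd.deriv
    rw [deriv_const] at this
    linarith
  have hpp : ∀ x : V, P t (P t x) = P t x := fun x =>
    congrFun (congrArg DFunLike.coe (hPidem t)) x
  have hmul : deriv P t * P t + P t * deriv P t = deriv P t := by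
    have hd : HasDerivAt (fun s => P s * P s) (deriv P t * P t + P t * deriv P t) t :=
      (hP t).hasDerivAt.mul (hP t).hasDerivAt
    have h2' : (fun s => P s * P s) = P := funext fun s => hPidem s
    rw [h2'] at hd
    exact hd.deriv.symm
  have hmv : ∀ x : V, deriv P t (P t x) + P t (deriv P t x) = deriv P t x := by
    intro x
    have := congrFun (congrArg DFunLike.coe hmul) x
    simpa [ContinuousLinearMap.mul_apply] using this
  have hz : ∀ x : V, P t (deriv P t (P t x)) = 0 := by
    intro x
    have h := hmv (P t x)
    rw [hpp] at h
    exact add_left_cancel (by rw [add_zero]; exact h)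
  have hqp : ∀ x : V, deriv P t (P t x) = deriv P t x - P t (deriv P t x) := by
    intro x; rw [eq_sub_iff_add_eq]; exact hmv x
  have hc1 : ⟪ς t, η t⟫ = ⟪η t, ς t⟫ := real_inner_comm _ _
  have hc2 : ⟪ς t, P t (η t)⟫ = ⟪η t, P t (ς t)⟫ := by
    rw [← h1]; exact real_inner_comm _ _
  have hc3 : ⟪ς t, R t (η t)⟫ = ⟪η t, R t (ς t)⟫ := by
    rw [← h3]; exact real_inner_comm _ _
  have hc4 : ⟪ς t, P t (R t (η t))⟫ = ⟪η t, R t (P t (ς t))⟫ := by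
    rw [← h1, ← h3]; exact real_inner_comm _ _
  have hc5 : ⟪η t, P t (R t (η t))⟫ = ⟪η t, R t (P t (η t))⟫ := by
    rw [← h1, ← h3]; exact real_inner_comm _ _
  have hq2 : ∀ x : V, ⟪x, deriv P t x⟫ = 2 * ⟪x, P t (deriv P t x)⟫ := by
    intro x
    have hswap : ⟪x, deriv P t (P t x)⟫ = ⟪x, P t (deriv P t x)⟫ := by
      rw [← h2, ← h1]; exact real_inner_comm _ _
    calc ⟪x, deriv P t x⟫ = ⟪x, deriv P t (P t x) + P t (deriv P t x)⟫ := by rw [hmv]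
      _ = ⟪x, deriv P t (P t x)⟫ + ⟪x, P t (deriv P t x)⟫ := inner_add_right _ _ _
      _ = 2 * ⟪x, P t (deriv P t x)⟫ := by rw [hswap]; ring
  simp only [h3, h2, h1, hpp, hz, hqp, map_sub, inner_zero_right, inner_zero_left,
    inner_sub_right, inner_sub_left, hc1, hc2, hc3, hc4, hc5, hq2]
  ring
end

section
/- Let V be a finite-dimensional real inner product space with an orthogonal direct sum decomposition V = A ⊕ B, with orthogonal projections P_A, P_B (write η_A = P_A η, η_B = P_B η). Let α > β > 0 and e ∈ (β, α). Let K : V →L[ℝ] V be a symmetric operator with K(A) ⊆ A and K(B) ⊆ B such that ⟨K x, x⟩ ≤ −α²‖x‖² for all x ∈ A, and ‖K x‖ ≤ β²‖x‖ for all x ∈ B. Then for all η, ς ∈ V with ⟨η_A, ς_A⟩ − e²‖η_B‖² − ‖ς_B‖² > 0, one has ‖ς_A‖² − ⟨K η_A, η_A⟩ − 2e²⟨η_B, ς_B⟩ + 2⟨K η_B, ς_B⟩ > 0. -/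
open RealInnerProductSpace

/-- Positivity of the derivative of `Q^e` on the positive cone, unperturbed case `A' = 0`:
if `K` is symmetric, preserves `A` and `B`, with `⟪Kx,x⟫ ≤ -α²‖x‖²` on `A` and
`‖Kx‖ ≤ β²‖x‖` on `B`, and `β < e < α`, then the displayed expression is positive on the
positive cone of `Q^e`. -/
theorem stmt_5 {V : Type*} [NormedAddCommGroup V] [InnerProductSpace ℝ V]
    [FiniteDimensional ℝ V]
    (A B : Submodule ℝ V) (hAB : B = Aᗮ)
    (α β e : ℝ) (hβ : 0 < β) (hβα : β < α) (hβe : β < e) (heα : e < α)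
    (K : V →L[ℝ] V) (hKsym : IsSelfAdjoint K)
    (hKA : ∀ x ∈ A, K x ∈ A) (hKB : ∀ x ∈ B, K x ∈ B)
    (hKAneg : ∀ x ∈ A, ⟪K x, x⟫ ≤ -α ^ 2 * ‖x‖ ^ 2)
    (hKBsmall : ∀ x ∈ B, ‖K x‖ ≤ β ^ 2 * ‖x‖) :
    ∀ η ς : V,
      0 < ⟪(Submodule.orthogonalProjectionOnto A η : V), (Submodule.orthogonalProjectionOnto A ς : V)⟫
          - e ^ 2 * ‖(Submodule.orthogonalProjectionOnto B η : V)‖ ^ 2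
          - ‖(Submodule.orthogonalProjectionOnto B ς : V)‖ ^ 2 →
      0 < ‖(Submodule.orthogonalProjectionOnto A ς : V)‖ ^ 2
          - ⟪K (Submodule.orthogonalProjectionOnto A η : V), (Submodule.orthogonalProjectionOnto A η : V)⟫
          - 2 * e ^ 2 * ⟪(Submodule.orthogonalProjectionOnto B η : V), (Submodule.orthogonalProjectionOnto B ς : V)⟫
          + 2 * ⟪K (Submodule.orthogonalProjectionOnto B η : V), (Submodule.orthogonalProjectionOnto B ς : V)⟫ := by
  intro η ς hQ
  set a : V := (Submodule.orthogonalProjectionOnto A η : V) with ha_def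
  set b : V := (Submodule.orthogonalProjectionOnto B η : V) with hb_def
  set c : V := (Submodule.orthogonalProjectionOnto A ς : V) with hc_def
  set d : V := (Submodule.orthogonalProjectionOnto B ς : V) with hd_def
  have ha : a ∈ A := (Submodule.orthogonalProjectionOnto A η).2
  have hb : b ∈ B := (Submodule.orthogonalProjectionOnto B η).2
  have h1 : ⟪K a, a⟫ ≤ -α ^ 2 * ‖a‖ ^ 2 := hKAneg a ha
  have h2 : ‖K b‖ ≤ β ^ 2 * ‖b‖ := hKBsmall b hb
  have h3 : |⟪K b, d⟫| ≤ ‖K b‖ * ‖d‖ := abs_real_inner_le_norm _ _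
  have h3' : -(β ^ 2 * ‖b‖ * ‖d‖) ≤ ⟪K b, d⟫ := by
    have := neg_abs_le (⟪K b, d⟫)
    nlinarith [norm_nonneg d, norm_nonneg (K b)]
  have h4 : ⟪b, d⟫ ≤ ‖b‖ * ‖d‖ := real_inner_le_norm _ _
  have h5 : ⟪a, c⟫ ≤ ‖a‖ * ‖c‖ := real_inner_le_norm _ _
  have amgm1 : 2 * e * (‖b‖ * ‖d‖) ≤ e ^ 2 * ‖b‖ ^ 2 + ‖d‖ ^ 2 := by
    nlinarith [sq_nonneg (e * ‖b‖ - ‖d‖)]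
  have amgm2 : 2 * α * (‖a‖ * ‖c‖) ≤ α ^ 2 * ‖a‖ ^ 2 + ‖c‖ ^ 2 := by
    nlinarith [sq_nonneg (α * ‖a‖ - ‖c‖)]
  have he : 0 < e := hβ.trans hβe
  have hα : 0 < α := he.trans heα
  have hbd : 0 ≤ ‖b‖ * ‖d‖ := mul_nonneg (norm_nonneg _) (norm_nonneg _)
  nlinarith [mul_lt_mul_of_pos_left hQ hα, mul_nonneg hbd (sub_pos.mpr hβe).le,
    mul_nonneg hbd (sub_pos.mpr heα).le, mul_nonneg hbd hβ.le]
end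

section
/- Let V be a nontrivial finite-dimensional real inner product space with an orthogonal direct sum decomposition V = A ⊕ B, with orthogonal projections P_A, P_B (write η_A = P_A η, η_B = P_B η). Let α > β > 0 and e ∈ (β, α). Let K : V →L[ℝ] V be a symmetric operator with K(A) ⊆ A and K(B) ⊆ B such that ⟨K x, x⟩ ≤ −α²‖x‖² for all x ∈ A, and ‖K x‖ ≤ β²‖x‖ for all x ∈ B. Then there exists ε > 0 such that for every linear operator D : V →L[ℝ] V with ‖D‖ < ε and all (η, ς) ∈ V × V with (η, ς) ≠ (0,0) and ⟨η_A, ς_A⟩ − e²‖η_B‖² − ‖ς_B‖² ≥ 0, one has ‖ς_A‖² − ⟨K η_A, η_A⟩ + ⟨D η_B, ς_A⟩ + ⟨η_A, D ς_B⟩ − 2e²⟨η_B, ς_B⟩ + 2⟨K η_B, ς_B⟩ + 2e²⟨D η_A, η_B⟩ + 2⟨D ς_A, ς_B⟩ > 0. -/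
open RealInnerProductSpace

set_option maxHeartbeats 1000000 in
private lemma arith_aux (α β e p q r s μ ε : ℝ)
    (he : 0 < e) (hα : 0 < α)
    (hΔ : 0 < 2*α*e - e^2 - β^2)
    (hμ : 0 < μ) (hμα : μ ≤ α) (hμαi : μ*α ≤ 1) (hμe : μ ≤ e^2) (hμ1 : μ ≤ 1)
    (hε : 0 < ε) (hε8 : 8*e*(2+e^2)*ε ≤ (2*α*e - e^2 - β^2)*μ)
    (hp : 0 ≤ p) (hq : 0 ≤ q) (hr : 0 ≤ r) (hs : 0 ≤ s)
    (hN : 0 < p^2+q^2+r^2+s^2)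
    (hcone : e^2*q^2 + s^2 ≤ p*r) :
    ε*(q*r + p*s + 2*e^2*p*q + 2*r*s) < r^2 + α^2*p^2 - 2*(e^2+β^2)*(q*s) := by
  have h1 : 2*α*(e^2*q^2+s^2) ≤ α^2*p^2+r^2 := by
    have hc := mul_le_mul_of_nonneg_left hcone (by linarith : (0:ℝ) ≤ 2*α)
    nlinarith [sq_nonneg (α*p - r)]
  have h2 : 2*e*(e^2+β^2)*(q*s) ≤ (e^2+β^2)*(e^2*q^2+s^2) := by
    have := mul_nonneg (by positivity : (0:ℝ) ≤ e^2+β^2) (sq_nonneg (e*q - s))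
    nlinarith [this]
  have t1 : (0:ℝ) ≤ ((2*α*e - e^2 - β^2)*α)*((α-μ)*p^2) :=
    mul_nonneg (mul_nonneg hΔ.le hα.le) (mul_nonneg (by linarith) (sq_nonneg p))
  have t2 : (0:ℝ) ≤ (2*α*e - e^2 - β^2)*((1-μ*α)*r^2) :=
    mul_nonneg hΔ.le (mul_nonneg (by linarith) (sq_nonneg r))
  have t3 : (0:ℝ) ≤ ((2*α*e - e^2 - β^2)*α)*((2*e^2-μ)*q^2) :=
    mul_nonneg (mul_nonneg hΔ.le hα.le) (mul_nonneg (by linarith) (sq_nonneg q))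
  have t4 : (0:ℝ) ≤ ((2*α*e - e^2 - β^2)*α)*((2-μ)*s^2) :=
    mul_nonneg (mul_nonneg hΔ.le hα.le) (mul_nonneg (by linarith) (sq_nonneg s))
  have h3a : α*((2*α*e - e^2 - β^2)*μ*(p^2+q^2+r^2+s^2)) ≤
      (2*α*e - e^2 - β^2)*(α^2*p^2+r^2) + 2*α*(2*α*e - e^2 - β^2)*(e^2*q^2+s^2) := by
    nlinarith [t1, t2, t3, t4]
  have hprod : (0:ℝ) ≤ (2*α*e + e^2 + β^2)*((α^2*p^2+r^2) - 2*α*(e^2*q^2+s^2)) :=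
    mul_nonneg (by positivity) (by linarith)
  have h3b : (2*α*e - e^2 - β^2)*(α^2*p^2+r^2) + 2*α*(2*α*e - e^2 - β^2)*(e^2*q^2+s^2) ≤
      α*(4*e*(α^2*p^2+r^2) - 4*(e^2+β^2)*(e^2*q^2+s^2)) := by
    nlinarith [hprod]
  have h2' := mul_le_mul_of_nonneg_left h2 (by linarith : (0:ℝ) ≤ 4*α)
  have h4 : (2*α*e - e^2 - β^2)*μ*(p^2+q^2+r^2+s^2) ≤
      4*e*(r^2 + α^2*p^2 - 2*(e^2+β^2)*(q*s)) := by
    have hmul : α*((2*α*e - e^2 - β^2)*μ*(p^2+q^2+r^2+s^2)) ≤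
        α*(4*e*(r^2 + α^2*p^2 - 2*(e^2+β^2)*(q*s))) := by nlinarith [h3a, h3b, h2']
    exact le_of_mul_le_mul_left hmul hα
  have hX : q*r + p*s + 2*e^2*p*q + 2*r*s ≤ (2+e^2)*(p^2+q^2+r^2+s^2) := by
    nlinarith [sq_nonneg (q-r), sq_nonneg (p-s), sq_nonneg (r-s),
      mul_nonneg (sq_nonneg e) (sq_nonneg (p-q)),
      mul_nonneg (sq_nonneg e) (sq_nonneg r), mul_nonneg (sq_nonneg e) (sq_nonneg s),
      sq_nonneg p, sq_nonneg q, sq_nonneg r, sq_nonneg s]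
  have hA := mul_le_mul_of_nonneg_left hX hε.le
  have hA8 := mul_le_mul_of_nonneg_left hA (by linarith : (0:ℝ) ≤ 8*e)
  have hB := mul_le_mul_of_nonneg_right hε8 hN.le
  have hfin1 : 8*e*(ε*(q*r + p*s + 2*e^2*p*q + 2*r*s)) ≤
      (2*α*e - e^2 - β^2)*μ*(p^2+q^2+r^2+s^2) := by nlinarith [hA8, hB]
  have h0 : 0 < (2*α*e - e^2 - β^2)*μ*(p^2+q^2+r^2+s^2) := by positivity
  have hE0pos : 0 < 4*e*(r^2 + α^2*p^2 - 2*(e^2+β^2)*(q*s)) := lt_of_lt_of_le h0 h4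
  have hlt : (8*e)*(ε*(q*r + p*s + 2*e^2*p*q + 2*r*s)) <
      (8*e)*(r^2 + α^2*p^2 - 2*(e^2+β^2)*(q*s)) := by nlinarith [hfin1, h4, h0]
  exact lt_of_mul_lt_mul_left hlt (by linarith)

set_option maxHeartbeats 1000000 in

/-- Quantitative version of Corollary 3.2: if the perturbation `D` (modeling the derivative
`A'` of the projection family) has small enough norm, then the derivative of `Q^e` stays
positive on the closed positive cone minus the origin. -/
theorem stmt_6 {V : Type*} [NormedAddCommGroup V] [InnerProductSpace ℝ V]
    [FiniteDimensional ℝ V] [Nontrivial V]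
    (A B : Submodule ℝ V) (hAB : B = Aᗮ)
    (α β e : ℝ) (hβ : 0 < β) (hβα : β < α) (hβe : β < e) (heα : e < α)
    (K : V →L[ℝ] V) (hKsym : IsSelfAdjoint K)
    (hKA : ∀ x ∈ A, K x ∈ A) (hKB : ∀ x ∈ B, K x ∈ B)
    (hKAneg : ∀ x ∈ A, ⟪K x, x⟫ ≤ -α ^ 2 * ‖x‖ ^ 2)
    (hKBsmall : ∀ x ∈ B, ‖K x‖ ≤ β ^ 2 * ‖x‖) :
    ∃ ε > 0, ∀ D : V →L[ℝ] V, ‖D‖ < ε →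
      ∀ η ς : V, (η, ς) ≠ (0, 0) →
      0 ≤ ⟪(A.orthogonalProjection η : V), (A.orthogonalProjection ς : V)⟫
          - e ^ 2 * ‖(B.orthogonalProjection η : V)‖ ^ 2
          - ‖(B.orthogonalProjection ς : V)‖ ^ 2 →
      0 < ‖(A.orthogonalProjection ς : V)‖ ^ 2
          - ⟪K (A.orthogonalProjection η : V), (A.orthogonalProjection η : V)⟫
          + ⟪D (B.orthogonalProjection η : V), (A.orthogonalProjection ς : V)⟫
          + ⟪(A.orthogonalProjection η : V), D (B.orthogonalProjection ς : V)⟫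
          - 2 * e ^ 2 * ⟪(B.orthogonalProjection η : V), (B.orthogonalProjection ς : V)⟫
          + 2 * ⟪K (B.orthogonalProjection η : V), (B.orthogonalProjection ς : V)⟫
          + 2 * e ^ 2 * ⟪D (A.orthogonalProjection η : V), (B.orthogonalProjection η : V)⟫
          + 2 * ⟪D (A.orthogonalProjection ς : V), (B.orthogonalProjection ς : V)⟫ := by
  subst hAB
  have he : (0:ℝ) < e := lt_trans hβ hβe
  have hα : (0:ℝ) < α := lt_trans he heα
  have hΔ : (0:ℝ) < 2*α*e - e^2 - β^2 := by nlinarith [mul_pos he (sub_pos.2 heα), mul_pos (sub_pos.2 hβe) (by linarith : (0:ℝ) < e + β)]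
  set μ : ℝ := min (min α α⁻¹) (min (e^2) 1) with hμdef
  have hμ : 0 < μ := lt_min (lt_min hα (inv_pos.2 hα)) (lt_min (by positivity) one_pos)
  have hμα : μ ≤ α := le_trans (min_le_left _ _) (min_le_left _ _)
  have hμαinv : μ ≤ α⁻¹ := le_trans (min_le_left _ _) (min_le_right _ _)
  have hμαi : μ*α ≤ 1 := by
    have := mul_le_mul_of_nonneg_right hμαinv hα.le
    rwa [inv_mul_cancel₀ hα.ne'] at this
  have hμe : μ ≤ e^2 := le_trans (min_le_right _ _) (min_le_left _ _)
  have hμ1 : μ ≤ 1 := le_trans (min_le_right _ _) (min_le_right _ _)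
  refine ⟨(2*α*e - e^2 - β^2)*μ/(16*e*(2+e^2)), by positivity, ?_⟩
  intro D hD η ς hne hcone
  set ε : ℝ := (2*α*e - e^2 - β^2)*μ/(16*e*(2+e^2)) with hεdef
  have hε : 0 < ε := by positivity
  have hε8 : 8*e*(2+e^2)*ε ≤ (2*α*e - e^2 - β^2)*μ := by
    rw [hεdef]
    rw [div_eq_mul_inv]
    have h16 : (0:ℝ) < 16*e*(2+e^2) := by positivity
    rw [mul_comm ((2*α*e - e^2 - β^2)*μ) (16*e*(2+e^2))⁻¹, ← mul_assoc]
    have : 8*e*(2+e^2) * (16*e*(2+e^2))⁻¹ = 1/2 := by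
      field_simp; ring
    rw [this]
    nlinarith [mul_nonneg hΔ.le hμ.le]
  set a := (A.orthogonalProjection η : V) with hadef
  set b := (Aᗮ.orthogonalProjection η : V) with hbdef
  set c := (A.orthogonalProjection ς : V) with hcdef
  set d := (Aᗮ.orthogonalProjection ς : V) with hddef
  have haA : a ∈ A := SetLike.coe_mem _
  have hbB : b ∈ Aᗮ := SetLike.coe_mem _
  have hKaa : ⟪K a, a⟫ ≤ -α^2*‖a‖^2 := hKAneg a haA
  have hKbd : -(β^2*(‖b‖*‖d‖)) ≤ ⟪K b, d⟫ := by
    have h1 := abs_real_inner_le_norm (K b) d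
    have h2 := mul_le_mul_of_nonneg_right (hKBsmall b hbB) (norm_nonneg d)
    have h3 := neg_abs_le (⟪K b, d⟫ : ℝ)
    nlinarith [h1, h2, h3]
  have hac : (⟪a, c⟫ : ℝ) ≤ ‖a‖*‖c‖ := real_inner_le_norm a c
  have hbd : (⟪b, d⟫ : ℝ) ≤ ‖b‖*‖d‖ := real_inner_le_norm b d
  have hDbound : ∀ x y : V, -(ε*(‖x‖*‖y‖)) ≤ ⟪D x, y⟫ := by
    intro x y
    have h1 := abs_real_inner_le_norm (D x) y
    have h2 := mul_le_mul_of_nonneg_right (D.le_opNorm x) (norm_nonneg y)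
    have h3 := neg_abs_le (⟪D x, y⟫ : ℝ)
    have h4 : ‖D‖*‖x‖*‖y‖ ≤ ε*(‖x‖*‖y‖) := by
      nlinarith [mul_le_mul_of_nonneg_right hD.le (mul_nonneg (norm_nonneg x) (norm_nonneg y))]
    nlinarith [h1, h2, h3, h4]
  have hD1 : -(ε*(‖b‖*‖c‖)) ≤ ⟪D b, c⟫ := hDbound b c
  have hD2 : -(ε*(‖d‖*‖a‖)) ≤ ⟪a, D d⟫ := by rw [real_inner_comm]; exact hDbound d a
  have hD3 : -(ε*(‖a‖*‖b‖)) ≤ ⟪D a, b⟫ := hDbound a b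
  have hD4 : -(ε*(‖c‖*‖d‖)) ≤ ⟪D c, d⟫ := hDbound c d
  have hsumη : a + b = η := A.starProjection_add_starProjection_orthogonal η
  have hsumς : c + d = ς := A.starProjection_add_starProjection_orthogonal ς
  have hN : 0 < ‖a‖^2+‖b‖^2+‖c‖^2+‖d‖^2 := by
    by_contra hcon
    push_neg at hcon
    have key : ∀ x : V, ‖x‖^2 ≤ 0 → x = 0 := fun x hx =>
      norm_eq_zero.mp (pow_eq_zero_iff two_ne_zero |>.mp (le_antisymm hx (sq_nonneg _)))
    have ha0 : a = 0 := key a (by nlinarith [sq_nonneg ‖b‖, sq_nonneg ‖c‖, sq_nonneg ‖d‖])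
    have hb0 : b = 0 := key b (by nlinarith [sq_nonneg ‖a‖, sq_nonneg ‖c‖, sq_nonneg ‖d‖])
    have hc0 : c = 0 := key c (by nlinarith [sq_nonneg ‖a‖, sq_nonneg ‖b‖, sq_nonneg ‖d‖])
    have hd0 : d = 0 := key d (by nlinarith [sq_nonneg ‖a‖, sq_nonneg ‖b‖, sq_nonneg ‖c‖])
    apply hne
    rw [Prod.mk.injEq]
    constructor
    · rw [← hsumη, ha0, hb0, add_zero]
    · rw [← hsumς, hc0, hd0, add_zero]
  have hconeR : e^2*‖b‖^2 + ‖d‖^2 ≤ ‖a‖*‖c‖ := by linarith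
  have harith := arith_aux α β e ‖a‖ ‖b‖ ‖c‖ ‖d‖ μ ε he hα hΔ hμ hμα hμαi hμe hμ1 hε hε8
    (norm_nonneg a) (norm_nonneg b) (norm_nonneg c) (norm_nonneg d) hN hconeR
  have hbd2 := mul_le_mul_of_nonneg_left hbd (by positivity : (0:ℝ) ≤ 2*e^2)
  have hD3' := mul_le_mul_of_nonneg_left hD3 (by positivity : (0:ℝ) ≤ 2*e^2)
  nlinarith [harith, hKaa, hKbd, hD1, hD2, hD4, hbd2, hD3']
end

section
/- Let V be a finite-dimensional real inner product space with an orthogonal direct sum decomposition V = A ⊕ B, with orthogonal projections P_A, P_B (write η_A = P_A η, η_B = P_B η). Let a > 0 and e ∈ (a, 2a). Then for all η, ς ∈ V with ⟨η_A, ς_A⟩ − e²‖η_B‖² − ‖ς_B‖² > 0, one has 4a²‖η_A‖² + ‖ς_A‖² − 2e²⟨η_B, ς_B⟩ − 2a²⟨η_B, ς_B⟩ > 0. -/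
open RealInnerProductSpace

/-- The rank-one locally symmetric computation: on the positive cone of `Q^e`, with
`a < e < 2a`, the quantity `4a²‖η_A‖² + ‖ς_A‖² - 2e²⟪η_B,ς_B⟫ - 2a²⟪η_B,ς_B⟫` is positive. -/
theorem stmt_9 {V : Type*} [NormedAddCommGroup V] [InnerProductSpace ℝ V]
    [FiniteDimensional ℝ V]
    (A B : Submodule ℝ V) (hAB : B = Aᗮ)
    (a e : ℝ) (ha : 0 < a) (hae : a < e) (he2a : e < 2 * a) :
    ∀ η ς : V,
      0 < ⟪(A.orthogonalProjectionOnto η : V), (A.orthogonalProjectionOnto ς : V)⟫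
          - e ^ 2 * ‖(B.orthogonalProjectionOnto η : V)‖ ^ 2
          - ‖(B.orthogonalProjectionOnto ς : V)‖ ^ 2 →
      0 < 4 * a ^ 2 * ‖(A.orthogonalProjectionOnto η : V)‖ ^ 2
          + ‖(A.orthogonalProjectionOnto ς : V)‖ ^ 2
          - 2 * e ^ 2 * ⟪(B.orthogonalProjectionOnto η : V), (B.orthogonalProjectionOnto ς : V)⟫
          - 2 * a ^ 2 * ⟪(B.orthogonalProjectionOnto η : V), (B.orthogonalProjectionOnto ς : V)⟫ := by
  intro η ς h
  set ηA := (A.orthogonalProjectionOnto η : V)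
  set ςA := (A.orthogonalProjectionOnto ς : V)
  set ηB := (B.orthogonalProjectionOnto η : V)
  set ςB := (B.orthogonalProjectionOnto ς : V)
  have hp : ⟪ηA, ςA⟫ ≤ ‖ηA‖ * ‖ςA‖ := real_inner_le_norm _ _
  have hq : ⟪ηB, ςB⟫ ≤ ‖ηB‖ * ‖ςB‖ := real_inner_le_norm _ _
  have hx : (0:ℝ) ≤ ‖ηA‖ := norm_nonneg _
  have hy : (0:ℝ) ≤ ‖ςA‖ := norm_nonneg _
  have hb : (0:ℝ) ≤ ‖ηB‖ := norm_nonneg _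
  have hc : (0:ℝ) ≤ ‖ςB‖ := norm_nonneg _
  have hkey : e ^ 2 + a ^ 2 < 4 * a * e := by nlinarith [mul_pos (sub_pos.mpr hae) (sub_pos.mpr he2a)]
  nlinarith [sq_nonneg (2 * a * ‖ηA‖ - ‖ςA‖), sq_nonneg (e * ‖ηB‖ - ‖ςB‖),
    mul_nonneg hb hc, mul_pos ha ha, sq_nonneg (‖ηB‖ - ‖ςB‖),
    mul_lt_mul_of_pos_right hkey (ha.trans hae), mul_nonneg (mul_nonneg hb hb) (le_of_lt (ha.trans hae)),
    mul_nonneg (mul_nonneg hc hc) (le_of_lt ha)]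
end

section
/- Let V be a finite-dimensional real inner product space with an orthogonal direct sum decomposition V = A ⊕ B, with orthogonal projections P_A, P_B (write η_A = P_A η, η_B = P_B η). Let a > 0 and e ∈ (a, 2a). Let η, ς : ℝ → V be differentiable curves with η'(t) = ς(t) and ς'(t) = 4a²η_A(t) + a²η_B(t), and set Q^e(t) = ⟨η_A(t), ς_A(t)⟩ − e²‖η_B(t)‖² − ‖ς_B(t)‖². Then for every t with Q^e(t) > 0, one has (Q^e)'(t) > 0. -/
open RealInnerProductSpace

/-- Strict monotonicity of `Q^e` on its positive cone for the rank-one locally symmetric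
linearized geodesic flow `η' = ς`, `ς' = 4a²η_A + a²η_B`, with `a < e < 2a`. -/
theorem stmt_10 {V : Type*} [NormedAddCommGroup V] [InnerProductSpace ℝ V]
    [FiniteDimensional ℝ V]
    (A B : Submodule ℝ V) (hAB : B = Aᗮ)
    (a e : ℝ) (ha : 0 < a) (hae : a < e) (he2a : e < 2 * a)
    (η ς : ℝ → V) (hη : Differentiable ℝ η) (hς : Differentiable ℝ ς)
    (hη' : ∀ t, deriv η t = ς t)
    (hς' : ∀ t, deriv ς t =
      (4 * a ^ 2) • (A.orthogonalProjectionOnto (η t) : V)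
        + a ^ 2 • (B.orthogonalProjectionOnto (η t) : V)) :
    ∀ t : ℝ,
      0 < ⟪(A.orthogonalProjectionOnto (η t) : V), (A.orthogonalProjectionOnto (ς t) : V)⟫
          - e ^ 2 * ‖(B.orthogonalProjectionOnto (η t) : V)‖ ^ 2
          - ‖(B.orthogonalProjectionOnto (ς t) : V)‖ ^ 2 →
      0 < deriv (fun s =>
        ⟪(A.orthogonalProjectionOnto (η s) : V), (A.orthogonalProjectionOnto (ς s) : V)⟫
          - e ^ 2 * ‖(B.orthogonalProjectionOnto (η s) : V)‖ ^ 2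
          - ‖(B.orthogonalProjectionOnto (ς s) : V)‖ ^ 2) t := by
  intro t hQ
  have hηd : HasDerivAt η (ς t) t := by
    have h := (hη t).hasDerivAt; rwa [hη' t] at h
  have hςd : HasDerivAt ς ((4 * a ^ 2) • (A.orthogonalProjectionOnto (η t) : V)
      + a ^ 2 • (B.orthogonalProjectionOnto (η t) : V)) t := by
    have h := (hς t).hasDerivAt; rwa [hς' t] at h
  -- projection identities
  have hAB0 : A.orthogonalProjectionOnto ((B.orthogonalProjectionOnto (η t) : V)) = 0 := by
    apply Submodule.orthogonalProjectionOnto_apply_of_mem_orthogonal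
    rw [← hAB]; exact (B.orthogonalProjectionOnto (η t)).2
  have hBA0 : B.orthogonalProjectionOnto ((A.orthogonalProjectionOnto (η t) : V)) = 0 := by
    apply Submodule.orthogonalProjectionOnto_apply_of_mem_orthogonal
    rw [hAB, Submodule.orthogonal_orthogonal]
    exact (A.orthogonalProjectionOnto (η t)).2
  -- derivatives of the projected curves
  have hAη : HasDerivAt (fun s => (A.orthogonalProjectionOnto (η s) : V))
      ((A.orthogonalProjectionOnto (ς t) : V)) t :=
    (A.subtypeL.comp (A.orthogonalProjectionOnto)).hasFDerivAt.comp_hasDerivAt t hηd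
  have hBη : HasDerivAt (fun s => (B.orthogonalProjectionOnto (η s) : V))
      ((B.orthogonalProjectionOnto (ς t) : V)) t :=
    (B.subtypeL.comp (B.orthogonalProjectionOnto)).hasFDerivAt.comp_hasDerivAt t hηd
  have hAς : HasDerivAt (fun s => (A.orthogonalProjectionOnto (ς s) : V))
      ((4 * a ^ 2) • (A.orthogonalProjectionOnto (η t) : V)) t := by
    have h := (A.subtypeL.comp (A.orthogonalProjectionOnto)).hasFDerivAt.comp_hasDerivAt t hςd
    convert h using 1
    · rfl
    simp only [ContinuousLinearMap.comp_apply, Submodule.subtypeL_apply, map_add, map_smul, hAB0, Submodule.orthogonalProjectionOnto_mem_subspace_eq_self, smul_zero, add_zero, zero_add, Submodule.coe_add, Submodule.coe_smul, ZeroMemClass.coe_zero]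
  have hBς : HasDerivAt (fun s => (B.orthogonalProjectionOnto (ς s) : V))
      (a ^ 2 • (B.orthogonalProjectionOnto (η t) : V)) t := by
    have h := (B.subtypeL.comp (B.orthogonalProjectionOnto)).hasFDerivAt.comp_hasDerivAt t hςd
    convert h using 1
    · rfl
    simp only [ContinuousLinearMap.comp_apply, Submodule.subtypeL_apply, map_add, map_smul, hBA0, Submodule.orthogonalProjectionOnto_mem_subspace_eq_self, smul_zero, add_zero, zero_add, Submodule.coe_add, Submodule.coe_smul, ZeroMemClass.coe_zero]
  -- assemble derivative of Q
  set ηA : V := (A.orthogonalProjectionOnto (η t) : V)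
  set ηB : V := (B.orthogonalProjectionOnto (η t) : V)
  set ςA : V := (A.orthogonalProjectionOnto (ς t) : V)
  set ςB : V := (B.orthogonalProjectionOnto (ς t) : V)
  have h1 : HasDerivAt (fun s => ⟪(A.orthogonalProjectionOnto (η s) : V),
      (A.orthogonalProjectionOnto (ς s) : V)⟫)
      (⟪ηA, (4 * a ^ 2) • ηA⟫ + ⟪ςA, ςA⟫) t := hAη.inner ℝ hAς
  have h2 : HasDerivAt (fun s => ⟪(B.orthogonalProjectionOnto (η s) : V),
      (B.orthogonalProjectionOnto (η s) : V)⟫)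
      (⟪ηB, ςB⟫ + ⟪ςB, ηB⟫) t := hBη.inner ℝ hBη
  have h3 : HasDerivAt (fun s => ⟪(B.orthogonalProjectionOnto (ς s) : V),
      (B.orthogonalProjectionOnto (ς s) : V)⟫)
      (⟪ςB, a ^ 2 • ηB⟫ + ⟪a ^ 2 • ηB, ςB⟫) t := hBς.inner ℝ hBς
  have hD : HasDerivAt (fun s =>
      ⟪(A.orthogonalProjectionOnto (η s) : V), (A.orthogonalProjectionOnto (ς s) : V)⟫
        - e ^ 2 * ‖(B.orthogonalProjectionOnto (η s) : V)‖ ^ 2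
        - ‖(B.orthogonalProjectionOnto (ς s) : V)‖ ^ 2)
      ((⟪ηA, (4 * a ^ 2) • ηA⟫ + ⟪ςA, ςA⟫)
        - e ^ 2 * (⟪ηB, ςB⟫ + ⟪ςB, ηB⟫)
        - (⟪ςB, a ^ 2 • ηB⟫ + ⟪a ^ 2 • ηB, ςB⟫)) t := by
    have := (h1.sub (h2.const_mul (e ^ 2))).sub h3
    convert this using 2 with s
    · rfl
    · rfl
    · simp only [Pi.sub_apply, ← real_inner_self_eq_norm_sq]
  rw [hD.deriv]
  simp only [inner_smul_right, inner_smul_left, starRingEnd_apply, star_trivial]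
  have hcs1 : ⟪ηA, ςA⟫ ≤ ‖ηA‖ * ‖ςA‖ := real_inner_le_norm _ _
  have hcs2 : ⟪ηB, ςB⟫ ≤ ‖ηB‖ * ‖ςB‖ := real_inner_le_norm _ _
  have e1 : ⟪ηA, ηA⟫ = ‖ηA‖ ^ 2 := real_inner_self_eq_norm_sq _
  have e2 : ⟪ςA, ςA⟫ = ‖ςA‖ ^ 2 := real_inner_self_eq_norm_sq _
  have hsym : ⟪ςB, ηB⟫ = ⟪ηB, ςB⟫ := real_inner_comm _ _
  rw [e1, e2, hsym]
  have hnA : (0:ℝ) ≤ ‖ηA‖ := norm_nonneg _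
  have hnB : (0:ℝ) ≤ ‖ηB‖ := norm_nonneg _
  have hsA : (0:ℝ) ≤ ‖ςA‖ := norm_nonneg _
  have hsB : (0:ℝ) ≤ ‖ςB‖ := norm_nonneg _
  clear hD h1 h2 h3 hAη hBη hAς hBς hςd hηd hAB0 hBA0 hη' hς' hη hς e1 e2
  set i := ⟪ηA, ςA⟫ with hi
  set j := ⟪ηB, ςB⟫ with hj
  set x := ‖ηA‖ with hx
  set y := ‖ςA‖ with hy
  set n := ‖ηB‖ with hn
  set sb := ‖ςB‖ with hs
  clear_value i j x y n sb
  clear hi hj hx hy hn hs hsym hAB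
  have he : (0:ℝ) < e := lt_trans ha hae
  have hp : (0:ℝ) < 4*a*e - e^2 - a^2 := by
    nlinarith [mul_pos (sub_pos.mpr hae) (sub_pos.mpr he2a), mul_pos ha he]
  have key : (0:ℝ) ≤ e * (4*a*(e^2*n^2 + sb^2) - 2*(e^2+a^2)*(n*sb)) := by
    nlinarith [mul_nonneg hp.le (by positivity : (0:ℝ) ≤ e^2*n^2 + sb^2),
      mul_nonneg (by positivity : (0:ℝ) ≤ e^2+a^2) (sq_nonneg (e*n - sb))]
  have key2 : (0:ℝ) ≤ 4*a*(e^2*n^2 + sb^2) - 2*(e^2+a^2)*(n*sb) := by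
    nlinarith [key, he]
  nlinarith [sq_nonneg (y - 2*a*x),
    mul_nonneg (by linarith : (0:ℝ) ≤ 4*a) (sub_nonneg.mpr hcs1),
    mul_pos (by linarith : (0:ℝ) < 4*a) hQ,
    mul_nonneg (by positivity : (0:ℝ) ≤ 2*(e^2+a^2)) (sub_nonneg.mpr hcs2),
    key2]
end
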